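/- Let λ ≤ 0 and ξ ≠ 0 be real constants, and let a₀ > 0 and a₁ ∈ ℝ. Then the initial value problem for the Emden equation a''(t) = −λ/a(t) + ξ²/a(t)³, a(0) = a₀, a'(0) = a₁, has a twice continuously differentiable solution a defined on all of ℝ with a(t) > 0 for every t ∈ ℝ; in particular the solution is global in time and never reaches zero. -/

import Mathlib

open Set Real

noncomputable def emdG (lam ξ m : ℝ) (x : ℝ) : ℝ := -lam / max x m + ξ ^ 2 / (max x m) ^ 3

noncomputable def emdF (lam ξ m : ℝ) (x : ℝ × ℝ) : ℝ × ℝ := (x.2, emdG lam ξ m x.1)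

noncomputable def emdV (lam ξ m : ℝ) (x : ℝ) : ℝ :=
  lam * Real.log (max x m) + ξ ^ 2 / 2 * ((max x m) ^ 2)⁻¹ + emdG lam ξ m m * (m - min x m)

lemma emdG_pos {lam ξ m : ℝ} (hlam : lam ≤ 0) (hξ : ξ ≠ 0) (hm : 0 < m) (x : ℝ) :
    0 < emdG lam ξ m x := by
  have h1 : (0:ℝ) < max x m := lt_of_lt_of_le hm (le_max_right _ _)
  have : 0 < ξ ^ 2 / (max x m) ^ 3 := by positivity
  have h2 : 0 ≤ -lam / max x m := by
    apply div_nonneg (by linarith) h1.le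
  unfold emdG; linarith

lemma emdG_le {lam ξ m : ℝ} (hlam : lam ≤ 0) (hm : 0 < m) (x : ℝ) :
    emdG lam ξ m x ≤ emdG lam ξ m m := by
  have h1 : m ≤ max x m := le_max_right _ _
  have h2 : (0:ℝ) < max x m := lt_of_lt_of_le hm h1
  unfold emdG
  rw [max_self]
  have e1 : -lam / max x m ≤ -lam / m :=
    div_le_div_of_nonneg_left (by linarith) hm h1
  have e2 : ξ ^ 2 / (max x m) ^ 3 ≤ ξ ^ 2 / m ^ 3 :=
    div_le_div_of_nonneg_left (by positivity) (by positivity) (pow_le_pow_left₀ hm.le h1 3)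
  linarith

lemma max_lipschitz (m : ℝ) : LipschitzWith 1 (fun x : ℝ => max x m) := by
  refine LipschitzWith.of_dist_le_mul fun x y => ?_
  simp only [Real.dist_eq, NNReal.coe_one, one_mul]
  exact abs_max_sub_max_le_abs x y m

lemma emdG_lipschitz {lam ξ m : ℝ} (hm : 0 < m) :
    ∃ L : NNReal, LipschitzWith L (emdG lam ξ m) := by
  set L₀ : ℝ := |lam| / m ^ 2 + 3 * ξ ^ 2 / m ^ 4 with hL₀
  have hL₀0 : 0 ≤ L₀ := by positivity
  refine ⟨⟨L₀, hL₀0⟩, ?_⟩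
  have key : LipschitzOnWith ⟨L₀, hL₀0⟩ (fun x : ℝ => -lam / x + ξ ^ 2 / x ^ 3) (Ici m) := by
    apply (convex_Ici m).lipschitzOnWith_of_nnnorm_hasDerivWithin_le
      (f' := fun x => -lam * (-(x^2)⁻¹) + ξ ^ 2 * (-(3 * x ^ 2) / ((x ^ 3) ^ 2)))
    · intro x hx
      have hx0 : (0:ℝ) < x := lt_of_lt_of_le hm hx
      have h1 : HasDerivWithinAt (fun x : ℝ => -lam / x) (-lam * (-(x^2)⁻¹)) (Ici m) x := by
        simpa [div_eq_mul_inv] using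
          ((hasDerivAt_inv hx0.ne').const_mul (-lam)).hasDerivWithinAt
      have h2 : HasDerivWithinAt (fun x : ℝ => ξ ^ 2 / x ^ 3)
          (ξ ^ 2 * (-(3 * x ^ 2) / ((x ^ 3) ^ 2))) (Ici m) x := by
        have := HasDerivAt.hasDerivWithinAt (s := Ici m)
          (((hasDerivAt_pow 3 x).inv (pow_ne_zero 3 hx0.ne')).const_mul (ξ ^ 2))
        simpa [div_eq_mul_inv, mul_comm, mul_assoc, mul_left_comm] using this
      exact h1.add h2
    · intro x hx
      have hx0 : (0:ℝ) < x := lt_of_lt_of_le hm hx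
      refine NNReal.coe_le_coe.mp (?_ : _ ≤ L₀)
      simp only [coe_nnnorm, Real.norm_eq_abs, NNReal.coe_mk]
      have e1 : |(-lam * (-(x^2)⁻¹) + ξ ^ 2 * (-(3 * x ^ 2) / ((x ^ 3) ^ 2)))|
          ≤ |lam| / x ^ 2 + 3 * ξ ^ 2 / x ^ 4 := by
        have : -lam * (-(x^2)⁻¹) + ξ ^ 2 * (-(3 * x ^ 2) / ((x ^ 3) ^ 2))
            = lam / x ^ 2 - 3 * ξ ^ 2 / x ^ 4 := by
          field_simp; ring
        rw [this]
        calc |lam / x ^ 2 - 3 * ξ ^ 2 / x ^ 4| ≤ |lam / x^2| + |3 * ξ^2 / x^4| := abs_sub _ _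
        _ = |lam| / x ^ 2 + 3 * ξ ^ 2 / x ^ 4 := by
            rw [abs_div, abs_div, abs_of_nonneg (by positivity : (0:ℝ) ≤ x^2),
              abs_of_nonneg (by positivity : (0:ℝ) ≤ 3*ξ^2),
              abs_of_nonneg (by positivity : (0:ℝ) ≤ x^4)]
      refine e1.trans ?_
      have e2 : |lam| / x ^ 2 ≤ |lam| / m ^ 2 :=
        div_le_div_of_nonneg_left (abs_nonneg _) (by positivity) (pow_le_pow_left₀ hm.le hx 2)
      have e3 : 3 * ξ ^ 2 / x ^ 4 ≤ 3 * ξ ^ 2 / m ^ 4 :=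
        div_le_div_of_nonneg_left (by positivity) (by positivity) (pow_le_pow_left₀ hm.le hx 4)
      linarith
  have comp := key.comp ((max_lipschitz m).lipschitzOnWith (s := univ))
    (fun x _ => le_max_right x m)
  replace comp := comp.weaken (mul_one _).le
  have : emdG lam ξ m = (fun x : ℝ => -lam / x + ξ ^ 2 / x ^ 3) ∘ (fun x : ℝ => max x m) := rfl
  rw [this]
  exact lipschitzOnWith_univ.mp comp

lemma emdF_lipschitz {lam ξ m : ℝ} (hm : 0 < m) :
    ∃ L : NNReal, LipschitzWith L (emdF lam ξ m) := by
  obtain ⟨L, hL⟩ := emdG_lipschitz (lam := lam) (ξ := ξ) hm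
  refine ⟨max (1 * 1) (L * 1), ?_⟩
  exact (LipschitzWith.id.comp LipschitzWith.prod_snd).prodMk (hL.comp LipschitzWith.prod_fst)

lemma emd_sol_Icc {lam ξ m : ℝ} (a₀ a₁ : ℝ) (hlam : lam ≤ 0) (hξ : ξ ≠ 0) (hm : 0 < m) (n : ℕ) :
    ∃ f : ℝ → ℝ × ℝ, f 0 = (a₀, a₁) ∧
      ∀ t ∈ Icc (-(n:ℝ)) n, HasDerivWithinAt f (emdF lam ξ m (f t)) (Icc (-(n:ℝ)) n) t := by
  set K : ℝ := emdG lam ξ m m with hKdef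
  have hK : 0 < K := emdG_pos hlam hξ hm m
  set B : ℝ := |a₁| + K * n + 1 with hBdef
  have hB : 0 < B := by positivity
  set ψ : ℝ → ℝ := fun b => max (-B) (min b B) with hψdef
  set v : ℝ × ℝ → ℝ × ℝ := fun x => (ψ x.2, emdG lam ξ m x.1) with hvdef
  -- Lipschitz constant for v
  obtain ⟨L, hL⟩ := emdG_lipschitz (lam := lam) (ξ := ξ) hm
  have hψlip : LipschitzWith 1 ψ := by
    refine LipschitzWith.of_dist_le_mul fun x y => ?_
    simp only [Real.dist_eq, NNReal.coe_one, one_mul, hψdef]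
    calc |max (-B) (min x B) - max (-B) (min y B)|
        ≤ max |(-B) - (-B)| |min x B - min y B| :=
          abs_max_sub_max_le_max (-B) (min x B) (-B) (min y B)
      _ ≤ max |(-B) - (-B)| (max |x - y| |B - B|) :=
          max_le_max le_rfl (abs_min_sub_min_le_max x B y B)
      _ ≤ |x - y| := by simp
  have hvlip : LipschitzWith (max (1 * 1) (L * 1)) v :=
    (hψlip.comp LipschitzWith.prod_snd).prodMk (hL.comp LipschitzWith.prod_fst)
  set C : ℝ := max B K with hCdef
  have hC : 0 < C := lt_of_lt_of_le hB (le_max_left _ _)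
  set R : ℝ := C * n + 1 with hRdef
  have hnormv : ∀ x : ℝ × ℝ, ‖v x‖ ≤ C := by
    intro x
    rw [Prod.norm_def]
    apply max_le
    · rw [Real.norm_eq_abs, abs_le]
      constructor
      · have h1 : -C ≤ -B := neg_le_neg (le_max_left _ _)
        exact le_trans h1 (le_max_left _ _)
      · refine le_trans (max_le (by linarith) (min_le_right _ _)) (le_max_left _ _)
    · rw [Real.norm_eq_abs, abs_of_pos (emdG_pos hlam hξ hm _)]
      exact le_trans (emdG_le hlam hm _) (le_max_right _ _)
  have hPL : IsPicardLindelof (fun _ : ℝ => v) (tmin := -(n:ℝ)) (tmax := (n:ℝ))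
      ⟨0, by constructor <;> simp [Nat.cast_nonneg]⟩ (a₀, a₁)
      ⟨R, by positivity⟩ 0 ⟨C, hC.le⟩ (max (1 * 1) (L * 1)) := by
    refine IsPicardLindelof.of_time_independent (fun x _ => hnormv x) hvlip.lipschitzOnWith ?_
    show C * max ((n:ℝ) - 0) (0 - -(n:ℝ)) ≤ R - 0
    have : max ((n:ℝ) - 0) (0 - -(n:ℝ)) = (n:ℝ) := by simp
    rw [this, hRdef]; linarith
  obtain ⟨f, hf0, hf⟩ := hPL.exists_eq_forall_mem_Icc_hasDerivWithinAt₀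
  replace hf0 : f 0 = (a₀, a₁) := hf0
  -- second component is K-Lipschitz on the interval
  have hβ : ∀ t ∈ Icc (-(n:ℝ)) n, HasDerivWithinAt (fun s => (f s).2)
      (emdG lam ξ m ((f t).1)) (Icc (-(n:ℝ)) n) t := by
    intro t ht
    exact (ContinuousLinearMap.snd ℝ ℝ ℝ).hasFDerivAt.comp_hasDerivWithinAt t (hf t ht)
  have hβbound : ∀ t ∈ Icc (-(n:ℝ)) n, |(f t).2| < B := by
    intro t ht
    have h0mem : (0:ℝ) ∈ Icc (-(n:ℝ)) n := by constructor <;> simp [Nat.cast_nonneg]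
    have := (convex_Icc (-(n:ℝ)) n).norm_image_sub_le_of_norm_hasDerivWithin_le
      (f' := fun s => emdG lam ξ m ((f s).1)) (C := K) hβ
      (fun s _ => by
        rw [Real.norm_eq_abs, abs_of_pos (emdG_pos hlam hξ hm _)]
        exact emdG_le hlam hm _) h0mem ht
    have htn : |t| ≤ (n:ℝ) := by
      rw [abs_le]; exact ⟨ht.1, ht.2⟩
    rw [hf0] at this
    simp only [sub_zero, Real.norm_eq_abs] at this
    have : |(f t).2 - a₁| ≤ K * n := le_trans this (by nlinarith)
    calc |(f t).2| ≤ |(f t).2 - a₁| + |a₁| := by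
          have := abs_sub_abs_le_abs_sub ((f t).2) a₁; have := abs_add_le ((f t).2 - a₁) a₁
          calc |(f t).2| = |((f t).2 - a₁) + a₁| := by ring_nf
          _ ≤ |(f t).2 - a₁| + |a₁| := abs_add_le _ _
      _ ≤ K * n + |a₁| := by linarith
      _ < B := by rw [hBdef]; linarith
  refine ⟨f, hf0, fun t ht => ?_⟩
  have hb := hβbound t ht
  rw [abs_lt] at hb
  have hveq : v (f t) = emdF lam ξ m (f t) := by
    show (max (-B) (min ((f t).2) B), emdG lam ξ m (f t).1) = ((f t).2, emdG lam ξ m (f t).1)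
    rw [min_eq_left hb.2.le, max_eq_right hb.1.le]
  rw [← hveq]
  exact hf t ht

lemma emd_sol_global {lam ξ m : ℝ} (a₀ a₁ : ℝ) (hlam : lam ≤ 0) (hξ : ξ ≠ 0) (hm : 0 < m) :
    ∃ f : ℝ → ℝ × ℝ, f 0 = (a₀, a₁) ∧ ∀ t, HasDerivAt f (emdF lam ξ m (f t)) t := by
  obtain ⟨L, hL⟩ := emdF_lipschitz (lam := lam) (ξ := ξ) hm
  choose sol h0 hsol using fun n => emd_sol_Icc (m := m) a₀ a₁ hlam hξ hm n
  have hsub : ∀ (r : ℝ) (j : ℕ), r ≤ (j:ℝ) → Icc (-r) r ⊆ Icc (-(j:ℝ)) (j:ℝ) :=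
    fun r j hr => Icc_subset_Icc (by linarith) hr
  have hDA : ∀ (j : ℕ) (t : ℝ), |t| < (j:ℝ) →
      HasDerivAt (sol j) (emdF lam ξ m (sol j t)) t := by
    intro j t ht
    rw [abs_lt] at ht
    exact (hsol j t ⟨ht.1.le, ht.2.le⟩).hasDerivAt (Icc_mem_nhds ht.1 ht.2)
  have key : ∀ (j k : ℕ) (t : ℝ), |t| < (j:ℝ) → |t| < (k:ℝ) → sol j t = sol k t := by
    intro j k t hj hk
    set r : ℝ := min (j:ℝ) (k:ℝ) with hrdef
    have hr0 : 0 < r := lt_of_le_of_lt (abs_nonneg t) (lt_min hj hk)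
    have htr : |t| < r := lt_min hj hk
    have hcont : ∀ (i : ℕ), r ≤ (i:ℝ) → ContinuousOn (sol i) (Icc (-r) r) := by
      intro i hi s hs
      exact ((hsol i s (hsub r i hi hs)).continuousWithinAt).mono (hsub r i hi)
    have hderiv : ∀ (i : ℕ), r ≤ (i:ℝ) → ∀ s ∈ Ioo (-r) r,
        HasDerivAt (sol i) (emdF lam ξ m (sol i s)) s := by
      intro i hi s hs
      refine hDA i s ?_
      rw [abs_lt]
      exact ⟨by linarith [hs.1], lt_of_lt_of_le hs.2 hi⟩
    have := ODE_solution_unique_of_mem_Icc (v := fun _ : ℝ => emdF lam ξ m)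
      (s := fun _ => univ) (K := L)
      (fun _ _ => hL.lipschitzOnWith) (t₀ := 0) (a := -r) (b := r)
      ⟨by linarith, hr0⟩
      (hcont j (min_le_left _ _)) (fun s hs => hderiv j (min_le_left _ _) s hs)
      (fun _ _ => trivial)
      (hcont k (min_le_right _ _)) (fun s hs => hderiv k (min_le_right _ _) s hs)
      (fun _ _ => trivial)
      (by rw [h0 j, h0 k])
    exact this (abs_le.mp htr.le)
  set F : ℝ → ℝ × ℝ := fun t => sol (⌈|t|⌉₊ + 1) t with hFdef
  have hlt : ∀ t : ℝ, |t| < ((⌈|t|⌉₊ + 1 : ℕ) : ℝ) := by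
    intro t
    push_cast
    have := Nat.le_ceil |t|
    linarith
  have hFt : ∀ (k : ℕ) (t : ℝ), |t| < (k:ℝ) → F t = sol k t :=
    fun k t h => key _ k t (hlt t) h
  refine ⟨F, ?_, ?_⟩
  · have : F 0 = sol (⌈|(0:ℝ)|⌉₊ + 1) 0 := rfl
    rw [this, h0]
  · intro t
    set k : ℕ := ⌈|t|⌉₊ + 1 with hkdef
    have htk : |t| < (k:ℝ) := hlt t
    have hopen : IsOpen {s : ℝ | |s| < (k:ℝ)} := isOpen_lt continuous_abs continuous_const
    have hev : F =ᶠ[nhds t] sol k :=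
      Filter.eventually_of_mem (hopen.mem_nhds htk) (fun s hs => hFt k s hs)
    rw [hFt k t htk]
    exact (hDA k t htk).congr_of_eventuallyEq hev

lemma emdW_deriv (lam ξ : ℝ) {y : ℝ} (hy : 0 < y) :
    HasDerivAt (fun y : ℝ => lam * Real.log y + ξ ^ 2 / 2 * (y ^ 2)⁻¹)
      (lam / y - ξ ^ 2 / y ^ 3) y := by
  have h1 : HasDerivAt (fun y : ℝ => lam * Real.log y) (lam * y⁻¹) y :=
    (Real.hasDerivAt_log hy.ne').const_mul lam
  have h2 : HasDerivAt (fun y : ℝ => ξ ^ 2 / 2 * (y ^ 2)⁻¹)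
      (ξ ^ 2 / 2 * (-(2 * y ^ (2 - 1)) / (y ^ 2) ^ 2)) y :=
    ((hasDerivAt_pow 2 y).inv (pow_ne_zero 2 hy.ne')).const_mul (ξ ^ 2 / 2)
  have := h1.add h2
  refine this.congr_deriv ?_
  field_simp
  ring

lemma emdV_deriv {lam ξ m : ℝ} (hm : 0 < m) (x : ℝ) :
    HasDerivAt (emdV lam ξ m) (-(emdG lam ξ m x)) x := by
  have hKm : max m m = m := max_self m
  rcases lt_trichotomy x m with hx | hx | hx
  · -- x < m : linear part
    have hW2 : HasDerivAt (fun y : ℝ =>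
        lam * Real.log m + ξ ^ 2 / 2 * (m ^ 2)⁻¹ + emdG lam ξ m m * (m - y))
        (-(emdG lam ξ m m)) x := by
      have : HasDerivAt (fun y : ℝ => m - y) (-1) x := by
        simpa using (hasDerivAt_id x).const_sub m
      simpa using ((this.const_mul (emdG lam ξ m m)).const_add
        (lam * Real.log m + ξ ^ 2 / 2 * (m ^ 2)⁻¹))
    have hev : emdV lam ξ m =ᶠ[nhds x] fun y =>
        lam * Real.log m + ξ ^ 2 / 2 * (m ^ 2)⁻¹ + emdG lam ξ m m * (m - y) := by
      refine Filter.eventually_of_mem (Iio_mem_nhds hx) (fun y hy => ?_)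
      have hy' : y < m := hy
      rw [emdV, max_eq_right hy'.le, min_eq_left hy'.le]
    have : HasDerivAt (emdV lam ξ m) (-(emdG lam ξ m m)) x := hW2.congr_of_eventuallyEq hev
    convert this using 2
    rw [emdG, emdG, max_eq_right hx.le, hKm]
  · -- x = m
    subst hx
    have hEq : -(emdG lam ξ x x) = lam / x - ξ ^ 2 / x ^ 3 := by
      rw [emdG, hKm]; ring
    rw [hEq]
    have h1 : HasDerivWithinAt (emdV lam ξ x) (lam / x - ξ ^ 2 / x ^ 3) (Ici x) x := by
      refine HasDerivWithinAt.congr ((emdW_deriv lam ξ hm).hasDerivWithinAt) ?_ ?_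
      · intro y hy
        rw [emdV, max_eq_left hy, min_eq_right hy, sub_self, mul_zero, add_zero]
      · rw [emdV, hKm, min_self, sub_self, mul_zero, add_zero]
    have h2 : HasDerivWithinAt (emdV lam ξ x) (lam / x - ξ ^ 2 / x ^ 3) (Iic x) x := by
      have hW2 : HasDerivAt (fun y : ℝ =>
          lam * Real.log x + ξ ^ 2 / 2 * (x ^ 2)⁻¹ + emdG lam ξ x x * (x - y))
          (-(emdG lam ξ x x)) x := by
        have : HasDerivAt (fun y : ℝ => x - y) (-1) x := by
          simpa using (hasDerivAt_id x).const_sub x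
        simpa using ((this.const_mul (emdG lam ξ x x)).const_add
          (lam * Real.log x + ξ ^ 2 / 2 * (x ^ 2)⁻¹))
      rw [← hEq]
      refine HasDerivWithinAt.congr (hW2.hasDerivWithinAt) ?_ ?_
      · intro y hy
        rw [emdV, max_eq_right hy, min_eq_left hy]
      · simp [emdV, hKm, min_self]
    have := h2.union h1
    rw [Iic_union_Ici] at this
    exact this.hasDerivAt (by simp)
  · -- x > m : smooth part
    have hx0 : 0 < x := lt_trans hm hx
    have hev : emdV lam ξ m =ᶠ[nhds x] fun y =>
        lam * Real.log y + ξ ^ 2 / 2 * (y ^ 2)⁻¹ := by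
      refine Filter.eventually_of_mem (Ioi_mem_nhds hx) (fun y hy => ?_)
      have hy' : m < y := hy
      rw [emdV, max_eq_left hy'.le, min_eq_right hy'.le, sub_self, mul_zero, add_zero]
    have : HasDerivAt (emdV lam ξ m) (lam / x - ξ ^ 2 / x ^ 3) x :=
      (emdW_deriv lam ξ hx0).congr_of_eventuallyEq hev
    convert this using 1
    rw [emdG, max_eq_left hx.le]; ring

/-- For `λ ≤ 0`, `ξ ≠ 0`, `a₀ > 0`, `a₁ ∈ ℝ`, the initial value problem for the
Emden equation `a'' = −λ/a + ξ²/a³`, `a(0) = a₀`, `a'(0) = a₁` has a twice continuously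
differentiable solution defined on all of `ℝ` which stays positive: the solution is global
in time and never reaches zero. -/
theorem emden_global_existence_nonpositive_lambda
    (lam ξ a₀ a₁ : ℝ) (hlam : lam ≤ 0) (hξ : ξ ≠ 0) (ha₀ : 0 < a₀) :
    ∃ a : ℝ → ℝ,
      ContDiff ℝ 2 a ∧
      (∀ t, 0 < a t) ∧
      (∀ t, deriv (deriv a) t = -lam / a t + ξ ^ 2 / (a t) ^ 3) ∧
      a 0 = a₀ ∧ deriv a 0 = a₁ := by
  set E₀ : ℝ := a₁ ^ 2 / 2 + (lam * Real.log a₀ + ξ ^ 2 / 2 * (a₀ ^ 2)⁻¹) with hE₀def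
  set d : ℝ := |ξ| / (2 * Real.sqrt (|E₀| + 1)) with hddef
  have hs : 0 < Real.sqrt (|E₀| + 1) := Real.sqrt_pos.mpr (by positivity)
  have hd : 0 < d := by
    rw [hddef]
    positivity
  set m : ℝ := min (min (a₀ / 2) (1 / 2)) d with hmdef
  have hm : 0 < m := lt_min (lt_min (by linarith) (by norm_num)) hd
  have hma : m < a₀ := lt_of_le_of_lt ((min_le_left _ _).trans (min_le_left _ _)) (by linarith)
  have hm1 : m ≤ 1 := le_trans ((min_le_left _ _).trans (min_le_right _ _)) (by norm_num)
  have hmd : m ≤ d := min_le_right _ _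
  -- the potential barrier
  have hVm : E₀ < lam * Real.log m + ξ ^ 2 / 2 * (m ^ 2)⁻¹ := by
    have h1 : 0 ≤ lam * Real.log m := by
      nlinarith [Real.log_nonpos hm.le hm1]
    have hd2 : d ^ 2 = ξ ^ 2 / (4 * (|E₀| + 1)) := by
      rw [hddef, div_pow, mul_pow, sq_abs, Real.sq_sqrt (by positivity)]
      ring
    have hm2 : m ^ 2 ≤ d ^ 2 := pow_le_pow_left₀ hm.le hmd 2
    have hinv : (d ^ 2)⁻¹ ≤ (m ^ 2)⁻¹ := by
      apply inv_anti₀ (by positivity) hm2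
    have h2 : ξ ^ 2 / 2 * (d ^ 2)⁻¹ = 2 * (|E₀| + 1) := by
      rw [hd2]
      field_simp
      ring
    have h3 : ξ ^ 2 / 2 * (d ^ 2)⁻¹ ≤ ξ ^ 2 / 2 * (m ^ 2)⁻¹ := by
      apply mul_le_mul_of_nonneg_left hinv (by positivity)
    have h4 : E₀ ≤ |E₀| := le_abs_self E₀
    have h5 : 0 ≤ |E₀| := abs_nonneg E₀
    clear_value E₀ d m
    linarith
  -- global solution of the truncated system
  obtain ⟨f, hf0, hf⟩ := emd_sol_global (m := m) a₀ a₁ hlam hξ hm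
  set α : ℝ → ℝ := fun t => (f t).1 with hαdef
  set β : ℝ → ℝ := fun t => (f t).2 with hβdef
  have hα : ∀ t, HasDerivAt α (β t) t := fun t =>
    (ContinuousLinearMap.fst ℝ ℝ ℝ).hasFDerivAt.comp_hasDerivAt t (hf t)
  have hβ' : ∀ t, HasDerivAt β (emdG lam ξ m (α t)) t := fun t =>
    (ContinuousLinearMap.snd ℝ ℝ ℝ).hasFDerivAt.comp_hasDerivAt t (hf t)
  have hα0 : α 0 = a₀ := by rw [hαdef]; simp [hf0]
  have hβ0 : β 0 = a₁ := by rw [hβdef]; simp [hf0]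
  -- energy conservation
  set Eng : ℝ → ℝ := fun t => (β t) ^ 2 / 2 + emdV lam ξ m (α t) with hEngdef
  have hEng' : ∀ t, HasDerivAt Eng 0 t := by
    intro t
    have h1 : HasDerivAt (fun t => (β t) ^ 2 / 2)
        ((2 * β t ^ 1 * emdG lam ξ m (α t)) / 2) t := ((hβ' t).pow 2).div_const 2
    have h2 : HasDerivAt (fun t => emdV lam ξ m (α t))
        (-(emdG lam ξ m (α t)) * β t) t := ((emdV_deriv hm (α t)).comp t (hα t))
    have := h1.add h2
    refine this.congr_deriv ?_
    ring
  have hEngconst : ∀ t, Eng t = Eng 0 := fun t =>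
    is_const_of_deriv_eq_zero (fun s => (hEng' s).differentiableAt)
      (fun s => (hEng' s).deriv) t 0
  have hEng0 : Eng 0 = E₀ := by
    rw [hEngdef]
    simp only [hα0, hβ0]
    rw [emdV, max_eq_left hma.le, min_eq_right hma.le, sub_self, mul_zero, add_zero, hE₀def]
  -- the solution stays above m
  have hαm : ∀ t, m < α t := by
    intro t
    by_contra hc
    push_neg at hc
    have hanti : Antitone (emdV lam ξ m) := by
      apply antitone_of_deriv_nonpos
      · exact fun x => (emdV_deriv hm x).differentiableAt
      · intro x
        rw [(emdV_deriv hm x).deriv]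
        have := emdG_pos hlam hξ hm x
        linarith
    have h1 : emdV lam ξ m m ≤ emdV lam ξ m (α t) := hanti hc
    have h2 : emdV lam ξ m (α t) ≤ E₀ := by
      have h := hEngconst t
      rw [hEng0] at h
      have h'' : 0 ≤ (β t) ^ 2 := sq_nonneg (β t)
      have h' : (β t) ^ 2 / 2 + emdV lam ξ m (α t) = E₀ := h
      clear_value E₀
      linarith
    have h3 : emdV lam ξ m m = lam * Real.log m + ξ ^ 2 / 2 * (m ^ 2)⁻¹ := by
      rw [emdV, max_self, min_self, sub_self, mul_zero, add_zero]
    rw [h3] at h1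
    exact absurd (h1.trans h2) (not_le.mpr hVm)
  have hαpos : ∀ t, 0 < α t := fun t => lt_trans hm (hαm t)
  -- derivatives
  have hda : deriv α = β := funext fun t => (hα t).deriv
  have hdb : deriv β = fun t => emdG lam ξ m (α t) := funext fun t => (hβ' t).deriv
  refine ⟨α, ?_, hαpos, ?_, hα0, by rw [hda]; exact hβ0⟩
  · rw [show (2 : WithTop ℕ∞) = 1 + 1 from rfl, contDiff_succ_iff_deriv]
    refine ⟨fun t => (hα t).differentiableAt, by simp, ?_⟩
    rw [hda, contDiff_one_iff_deriv]
    refine ⟨fun t => (hβ' t).differentiableAt, ?_⟩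
    rw [hdb]
    obtain ⟨L, hL⟩ := emdG_lipschitz (lam := lam) (ξ := ξ) hm
    exact hL.continuous.comp (Differentiable.continuous (fun t => (hα t).differentiableAt))
  · intro t
    rw [hda, hdb]
    simp only
    rw [emdG, max_eq_left (hαm t).le]
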